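/- There exists a fuzzy-valued function that is generalized Seikkala differentiable but not Seikkala differentiable; e.g., g(t) = a · exp(−t) where a is any fuzzy number with a₁ strictly increasing and a₂ strictly decreasing in α. -/

import Mathlib

def IsFuzzyLevel (L U : ℝ → ℝ) : Prop :=
  MonotoneOn L (Set.Icc 0 1) ∧ AntitoneOn U (Set.Icc 0 1) ∧
    ∀ α ∈ Set.Icc (0:ℝ) 1, L α ≤ U α

/-- `g(t) = a·exp(−t)`, with `a₁` strictly increasing and `a₂` strictly
decreasing, is gS-differentiable at every `t` but nowhere Seikkala
differentiable: the min/max family of the `t`-derivatives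
`−a₁(α)e^{−t}, −a₂(α)e^{−t}` is a fuzzy level family, while the ordered family
`[−a₁(α)e^{−t}, −a₂(α)e^{−t}]` is not. -/
theorem gS_not_S_exp
    (a₁ a₂ : ℝ → ℝ)
    (h₁ : StrictMonoOn a₁ (Set.Icc 0 1))
    (h₂ : StrictAntiOn a₂ (Set.Icc 0 1))
    (hle : ∀ α ∈ Set.Icc (0:ℝ) 1, a₁ α ≤ a₂ α) :
    ∀ t : ℝ,
      (∀ α ∈ Set.Icc (0:ℝ) 1,
        HasDerivAt (fun s => a₁ α * Real.exp (-s)) (-(a₁ α * Real.exp (-t))) t ∧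
        HasDerivAt (fun s => a₂ α * Real.exp (-s)) (-(a₂ α * Real.exp (-t))) t) ∧
      IsFuzzyLevel
        (fun α => min (-(a₁ α * Real.exp (-t))) (-(a₂ α * Real.exp (-t))))
        (fun α => max (-(a₁ α * Real.exp (-t))) (-(a₂ α * Real.exp (-t)))) ∧
      ¬ IsFuzzyLevel (fun α => -(a₁ α * Real.exp (-t)))
          (fun α => -(a₂ α * Real.exp (-t))) := by
  intro t
  have hexp : (0:ℝ) < Real.exp (-t) := Real.exp_pos _
  have hderiv : HasDerivAt (fun s : ℝ => Real.exp (-s)) (-Real.exp (-t)) t := by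
    simpa [Function.comp_def] using ((Real.hasDerivAt_exp (-t)).comp t ((hasDerivAt_id t).neg))
  refine ⟨fun α _ => ⟨?_, ?_⟩, ⟨?_, ?_, ?_⟩, ?_⟩
  · simpa [mul_neg] using hderiv.const_mul (a₁ α)
  · simpa [mul_neg] using hderiv.const_mul (a₂ α)
  · -- min = -a₂·e, monotone
    intro x hx y hy hxy
    have hmx : min (-(a₁ x * Real.exp (-t))) (-(a₂ x * Real.exp (-t)))
        = -(a₂ x * Real.exp (-t)) :=
      min_eq_right (by nlinarith [hle x hx])
    have hmy : min (-(a₁ y * Real.exp (-t))) (-(a₂ y * Real.exp (-t)))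
        = -(a₂ y * Real.exp (-t)) :=
      min_eq_right (by nlinarith [hle y hy])
    simp only [hmx, hmy]
    have := h₂.antitoneOn hx hy hxy
    nlinarith
  · -- max = -a₁·e, antitone
    intro x hx y hy hxy
    have hmx : max (-(a₁ x * Real.exp (-t))) (-(a₂ x * Real.exp (-t)))
        = -(a₁ x * Real.exp (-t)) :=
      max_eq_left (by nlinarith [hle x hx])
    have hmy : max (-(a₁ y * Real.exp (-t))) (-(a₂ y * Real.exp (-t)))
        = -(a₁ y * Real.exp (-t)) :=
      max_eq_left (by nlinarith [hle y hy])
    simp only [hmx, hmy]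
    have := h₁.monotoneOn hx hy hxy
    nlinarith
  · intro α _
    exact min_le_max
  · rintro ⟨hmono, -, -⟩
    have h0 : (0:ℝ) ∈ Set.Icc (0:ℝ) 1 := by norm_num
    have h1 : (1:ℝ) ∈ Set.Icc (0:ℝ) 1 := by norm_num
    have := hmono h0 h1 (by norm_num)
    have ha : a₁ 0 < a₁ 1 := h₁ h0 h1 (by norm_num)
    simp only at this
    nlinarith
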